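/- The FP quandle operation a ◁ b := a + x_i(j−i) (for a in the component A_i and b in the component A_j) defines an abelian quandle structure on Q = ⊔_{i ∈ ℤ/r} A_i. Moreover, if each A_i is generated as a group by the set {x_i(k) : k ∈ ℤ/r}, then the orbits of this quandle are exactly the r components A_i. -/

import Mathlib

variable {X : Type*}

/-- Quandle axioms for a binary operation `op` (right-translation convention):
self-distributivity, bijectivity of right translations, idempotence. -/
structure IsQuandleOp (op : X → X → X) : Prop where
  sd : ∀ a b c, op (op a b) c = op (op a c) (op b c)
  bij : ∀ b, Function.Bijective fun a => op a b
  idem : ∀ a, op a a = a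

/-- A quandle operation is abelian if `(a ◁ b) ◁ c = (a ◁ c) ◁ b`. -/
def IsAbelianOp (op : X → X → X) : Prop :=
  ∀ a b c, op (op a b) c = op (op a c) b

/-- The smallest equivalence relation identifying `a` with `op a b`. -/
def orbitRel (op : X → X → X) : X → X → Prop :=
  Relation.EqvGen fun a b => ∃ c, op a c = b

/-- The setoid of orbits of a quandle. -/
def orbitSetoid (op : X → X → X) : Setoid X :=
  ⟨orbitRel op, Relation.EqvGen.is_equivalence _⟩

/-- The filtered-permutation (FP) quandle operation on `⊔_{i ∈ ℤ/r} A i`: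
`a ◁ b = a + x i (j - i)` for `a ∈ A i`, `b ∈ A j`. -/
def fpOp {r : ℕ} (A : ZMod r → Type*) [∀ i, AddCommGroup (A i)]
    (x : (i : ZMod r) → ZMod r → A i) :
    (Σ i, A i) → (Σ i, A i) → (Σ i, A i) :=
  fun a b => ⟨a.1, a.2 + x a.1 (b.1 - a.1)⟩

/-- The FP operation defines an abelian quandle structure on
`⊔_{i ∈ ℤ/r} A i`; if moreover each `A i` is generated by `{x i k : k ∈ ℤ/r}`,
then the orbits are exactly the `r` components. -/
theorem fpOp_isAbelianQuandle_and_orbits (r : ℕ) (hr : 1 ≤ r)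
    (A : ZMod r → Type*) [∀ i, AddCommGroup (A i)]
    (x : (i : ZMod r) → ZMod r → A i) (hx0 : ∀ i, x i 0 = 0) :
    (IsQuandleOp (fpOp A x) ∧ IsAbelianOp (fpOp A x)) ∧
      ((∀ i, AddSubgroup.closure (Set.range (x i)) = ⊤) →
        ∀ a b : Σ i, A i, orbitRel (fpOp A x) a b ↔ a.1 = b.1) := by

  constructor
  · refine ⟨⟨fun a b c => ?_, fun b => ?_, fun a => ?_⟩, fun a b c => ?_⟩
    · simp only [fpOp, add_assoc]
      exact congrArg _ (add_right_comm _ _ _)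
    · apply Function.bijective_iff_has_inverse.mpr
      refine ⟨fun a => ⟨a.1, a.2 - x a.1 (b.1 - a.1)⟩, fun a => ?_, fun a => ?_⟩
      · obtain ⟨i, v⟩ := a; simp [fpOp]; exact add_sub_cancel_right _ _
      · simp [fpOp]
    · simp [fpOp, hx0]
    · simp only [fpOp, add_assoc]
      exact congrArg _ (add_right_comm _ _ _)
  · intro hgen a b
    constructor
    · intro h
      induction h with
      | rel a b hab => obtain ⟨c, rfl⟩ := hab; rfl
      | refl => rfl
      | symm _ _ _ ih => exact ih.symm
      | trans _ _ _ _ _ ih1 ih2 => exact ih1.trans ih2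
    · obtain ⟨i, v⟩ := a
      obtain ⟨j, w⟩ := b
      rintro (h : i = j)
      subst h
      -- the set of differences d with ⟨i,v⟩ ~ ⟨i,v+d⟩ is a subgroup
      set op := fpOp A x with hop
      have step : ∀ (v : A i) (k : ZMod r),
          orbitRel op ⟨i, v⟩ ⟨i, v + x i k⟩ := by
        intro v k
        apply Relation.EqvGen.rel
        exact ⟨⟨i + k, 0⟩, by simp [hop, fpOp]⟩
      let H : AddSubgroup (A i) :=
        { carrier := {d | ∀ v : A i, orbitRel op ⟨i, v⟩ ⟨i, v + d⟩}
          zero_mem' := fun v => by simpa [orbitRel] using Relation.EqvGen.refl (⟨i, v⟩ : Σ i, A i)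
          add_mem' := by
            intro d e hd he v
            rw [← add_assoc]
            exact (hd v).trans _ _ _ (he (v + d))
          neg_mem' := by
            intro d hd v
            have := hd (v + -d)
            simp only [neg_add_cancel_right] at this
            exact this.symm _ _ }
      have hH : (AddSubgroup.closure (Set.range (x i)) : AddSubgroup (A i)) ≤ H := by
        apply (AddSubgroup.closure_le H).mpr
        rintro _ ⟨k, rfl⟩
        exact fun v => step v k
      have hmem : w - v ∈ H := hH (by rw [hgen i]; trivial)
      have := hmem v
      simpa using this
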